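/- Let g be the 4-dimensional solvable real Lie algebra with basis e_1,…,e_4 and nonzero brackets [e_1,e_3] = −e_4 and [e_3,e_4] = −e_4, and let K be the endomorphism equal to +id on g⁺ := span(e_1, e_2) and −id on g⁻ := span(e_3, e_4). Then: (i) g is not unimodular (trace(ad e_3) = −1 ≠ 0); (ii) g = g⁺ ⊕ g⁻ is a linear D-complex structure with g⁺ abelian and g⁻ non-abelian; (iii) K is linear C∞-full at the 2nd stage, with H^2(g;ℝ) = span([e^1∧e^2], [e^3∧e^4], [e^2∧e^3]) where [e^1∧e^2], [e^3∧e^4] ∈ H^{2+}_K(g;ℝ) and [e^2∧e^3] ∈ H^{2−}_K(g;ℝ); (iv) K is not linear C∞-pure at the 2nd stage, since e^3∧e^4 − d(e^4) = −e^1∧e^3 shows 0 ≠ [e^3∧e^4] ∈ H^{2+}_K(g;ℝ) ∩ H^{2−}_K(g;ℝ). In particular, abelianity of only one eigen-subalgebra does not suffice for linear C∞-pure-ness at the 2nd stage. -/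

import Mathlib

open scoped BigOperators

noncomputable section ChevalleyEilenberg

variable (g : Type*) [LieRing g] [LieAlgebra ℝ g]

/-- The Chevalley–Eilenberg differential of an alternating `k`-form on a real Lie
algebra, as a function on `(k+1)`-tuples:
`(dα)(x_0,…,x_k) = Σ_{i<j} (−1)^{i+j} α([x_i,x_j], x_0,…,x̂_i,…,x̂_j,…,x_k)`. -/
def ceD : {k : ℕ} → AlternatingMap ℝ g ℝ (Fin k) → ((Fin (k + 1) → g) → ℝ)
  | 0, _ => 0
  | (k + 1), α => fun x =>
      ∑ i : Fin (k + 2), ∑ j : Fin (k + 2),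
        if hij : (i : ℕ) < (j : ℕ) then
          (-1 : ℝ) ^ ((i : ℕ) + (j : ℕ)) *
            α (fun m : Fin (k + 1) =>
                if hm : (m : ℕ) = 0 then ⁅x i, x j⁆
                else
                  x (j.succAbove
                      ((⟨(i : ℕ), by omega⟩ : Fin (k + 1)).succAbove
                        (⟨(m : ℕ) - 1, by omega⟩ : Fin k))))
        else 0

theorem ceD_zero {k : ℕ} : ceD g (0 : AlternatingMap ℝ g ℝ (Fin k)) = 0 := by
  cases k with
  | zero => rfl
  | succ k => funext x; simp [ceD]

theorem ceD_add {k : ℕ} (α β : AlternatingMap ℝ g ℝ (Fin k)) :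
    ceD g (α + β) = ceD g α + ceD g β := by
  cases k with
  | zero => funext x; simp [ceD]
  | succ k =>
    funext x
    simp only [ceD, Pi.add_apply, AlternatingMap.add_apply]
    rw [← Finset.sum_add_distrib]
    refine Finset.sum_congr rfl fun i _ => ?_
    rw [← Finset.sum_add_distrib]
    refine Finset.sum_congr rfl fun j _ => ?_
    split
    · ring
    · ring

theorem ceD_smul {k : ℕ} (c : ℝ) (α : AlternatingMap ℝ g ℝ (Fin k)) :
    ceD g (c • α) = c • ceD g α := by
  cases k with
  | zero => funext x; simp [ceD]
  | succ k =>
    funext x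
    simp only [ceD, Pi.smul_apply, AlternatingMap.smul_apply, smul_eq_mul,
      Finset.mul_sum]
    refine Finset.sum_congr rfl fun i _ => ?_
    refine Finset.sum_congr rfl fun j _ => ?_
    split
    · ring
    · ring

/-- The space of `d`-closed `k`-forms. -/
def Zsub (k : ℕ) : Submodule ℝ (AlternatingMap ℝ g ℝ (Fin k)) where
  carrier := {α | ceD g α = 0}
  add_mem' := by
    intro a b ha hb
    simp only [Set.mem_setOf_eq] at *
    rw [ceD_add, ha, hb, add_zero]
  zero_mem' := by
    simpa only [Set.mem_setOf_eq] using ceD_zero g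
  smul_mem' := by
    intro c a ha
    simp only [Set.mem_setOf_eq] at *
    rw [ceD_smul, ha, smul_zero]

/-- The space of `d`-exact `k`-forms. -/
def Bsub : (k : ℕ) → Submodule ℝ (AlternatingMap ℝ g ℝ (Fin k))
  | 0 => ⊥
  | (k + 1) =>
    { carrier := {α | ∃ β : AlternatingMap ℝ g ℝ (Fin k), ceD g β = ⇑α}
      add_mem' := by
        rintro a b ⟨βa, hβa⟩ ⟨βb, hβb⟩
        exact ⟨βa + βb, by rw [ceD_add, hβa, hβb]; ext x; simp⟩
      zero_mem' := ⟨0, by rw [ceD_zero]; ext x; simp⟩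
      smul_mem' := by
        rintro c a ⟨β, hβ⟩
        exact ⟨c • β, by rw [ceD_smul, hβ]; rfl⟩ }

instance Zsub.instAddCommGroup (k : ℕ) : AddCommGroup ↥(Zsub g k) :=
  Submodule.addCommGroup (Zsub g k)

/-- The `k`-th Lie algebra cohomology `H^k(g;ℝ) = ker d / im d`. -/
abbrev Hcoh (k : ℕ) : Type _ :=
  ↥(Zsub g k) ⧸ (Bsub g k).comap (Zsub g k).subtype

/-- The cohomology class of a `d`-closed `k`-form. -/
def cls {k : ℕ} (α : AlternatingMap ℝ g ℝ (Fin k)) (hα : ceD g α = 0) : Hcoh g k :=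
  Submodule.Quotient.mk (⟨α, hα⟩ : Zsub g k)

/-- The subgroup `H^{k+}_K(g;ℝ)` of classes admitting a `d`-closed `K`-invariant
representative.  (The set of such classes is a linear subspace, so taking its span
does not enlarge it.) -/
def Hplus (K : g →ₗ[ℝ] g) (k : ℕ) : Submodule ℝ (Hcoh g k) :=
  Submodule.span ℝ
    {c | ∃ (α : AlternatingMap ℝ g ℝ (Fin k)) (hα : ceD g α = 0),
        α.compLinearMap K = α ∧ c = cls g α hα}

/-- The subgroup `H^{k−}_K(g;ℝ)` of classes admitting a `d`-closed
`K`-anti-invariant representative. -/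
def Hminus (K : g →ₗ[ℝ] g) (k : ℕ) : Submodule ℝ (Hcoh g k) :=
  Submodule.span ℝ
    {c | ∃ (α : AlternatingMap ℝ g ℝ (Fin k)) (hα : ceD g α = 0),
        α.compLinearMap K = -α ∧ c = cls g α hα}

/-- The wedge product of `k` linear functionals, as an alternating `k`-form. -/
def wedge {k : ℕ} (fs : Fin k → (g →ₗ[ℝ] ℝ)) :
    AlternatingMap ℝ g ℝ (Fin k) :=
  MultilinearMap.alternatization
    ((MultilinearMap.mkPiAlgebra ℝ (Fin k) ℝ).compLinearMap fs)

end ChevalleyEilenberg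

section Helpers15

variable (g : Type*) [LieRing g] [LieAlgebra ℝ g]

theorem ceD_one_apply (α : AlternatingMap ℝ g ℝ (Fin 1)) (x : Fin 2 → g) :
    ceD g α x = -α ![⁅x 0, x 1⁆] := by
  show ∑ i : Fin 2, ∑ j : Fin 2, _ = _
  rw [Fin.sum_univ_two, Fin.sum_univ_two, Fin.sum_univ_two]
  norm_num
  congr 1
  ext m
  fin_cases m <;> simp

theorem ceD_two_apply (α : AlternatingMap ℝ g ℝ (Fin 2)) (x : Fin 3 → g) :
    ceD g α x = -α ![⁅x 0, x 1⁆, x 2] + α ![⁅x 0, x 2⁆, x 1] - α ![⁅x 1, x 2⁆, x 0] := by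
  show ∑ i : Fin 3, ∑ j : Fin 3, _ = _
  simp only [Fin.sum_univ_three]
  norm_num [Fin.succAbove]
  rw [sub_eq_add_neg]
  congr 1
  · congr 1
    · apply congrArg; apply congrArg
      funext m; fin_cases m <;> first | rfl | norm_num [Fin.lt_def, Fin.ext_iff]
    · apply congrArg
      funext m; fin_cases m <;> first | rfl | norm_num [Fin.lt_def, Fin.ext_iff]
  · apply congrArg; apply congrArg
    funext m; fin_cases m <;> first | rfl | norm_num [Fin.lt_def, Fin.ext_iff]

theorem wedge_one_apply (f : Fin 1 → (g →ₗ[ℝ] ℝ)) (u : Fin 1 → g) :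
    wedge g f u = f 0 (u 0) := by
  rw [wedge, MultilinearMap.alternatization_apply]
  rw [show (Finset.univ : Finset (Equiv.Perm (Fin 1))) = {1} from by decide]
  simp [MultilinearMap.domDomCongr_apply, MultilinearMap.compLinearMap_apply]

theorem wedge_two_apply (f : Fin 2 → (g →ₗ[ℝ] ℝ)) (u : Fin 2 → g) :
    wedge g f u = f 0 (u 0) * f 1 (u 1) - f 0 (u 1) * f 1 (u 0) := by
  rw [wedge, MultilinearMap.alternatization_apply]
  rw [show (Finset.univ : Finset (Equiv.Perm (Fin 2))) = {1, Equiv.swap 0 1} from by decide]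
  rw [Finset.sum_insert (by decide), Finset.sum_singleton]
  simp [MultilinearMap.domDomCongr_apply, MultilinearMap.compLinearMap_apply,
    Fin.prod_univ_two, Equiv.swap_apply_left, Equiv.swap_apply_right]
  ring

variable {g} in
theorem alt2_neg_left (α : AlternatingMap ℝ g ℝ (Fin 2)) (u w : g) :
    α ![-u, w] = -α ![u, w] := by
  have h1 : (![-u, w] : Fin 2 → g) = Function.update ![u, w] 0 (-u) := by
    funext m; fin_cases m <;> simp
  have h2 : (![u, w] : Fin 2 → g) = Function.update ![u, w] 0 u := by
    funext m; fin_cases m <;> simp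
  rw [h1, show α (Function.update ![u, w] 0 (-u)) =
    α.toMultilinearMap (Function.update ![u, w] 0 (-u)) from rfl,
    MultilinearMap.map_update_neg]
  rw [show α ![u, w] = α.toMultilinearMap ![u, w] from rfl]
  exact congrArg _ (congrArg _ h2.symm)

variable {g} in
theorem alt1_neg (α : AlternatingMap ℝ g ℝ (Fin 1)) (u : g) :
    α ![-u] = -α ![u] := by
  have h1 : (![-u] : Fin 1 → g) = Function.update ![u] 0 (-u) := by
    funext m; fin_cases m <;> simp
  have h2 : (![u] : Fin 1 → g) = Function.update ![u] 0 u := by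
    funext m; fin_cases m <;> simp
  rw [h1, show α (Function.update ![u] 0 (-u)) =
    α.toMultilinearMap (Function.update ![u] 0 (-u)) from rfl,
    MultilinearMap.map_update_neg]
  rw [show α ![u] = α.toMultilinearMap ![u] from rfl]
  exact congrArg _ (congrArg _ h2.symm)

variable {g} in
theorem alt2_zero_left (α : AlternatingMap ℝ g ℝ (Fin 2)) (w : g) :
    α ![0, w] = 0 := by
  have h1 : (![0, w] : Fin 2 → g) = Function.update ![0, w] 0 0 := by
    funext m; fin_cases m <;> simp
  rw [h1, show α (Function.update ![0, w] 0 0) =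
    α.toMultilinearMap (Function.update ![0, w] 0 0) from rfl,
    MultilinearMap.map_update_zero]

variable {g} in
theorem alt2_swap (α : AlternatingMap ℝ g ℝ (Fin 2)) (u w : g) :
    α ![w, u] = -α ![u, w] := by
  have h1 : (![w, u] : Fin 2 → g) = ![u, w] ∘ Equiv.swap 0 1 := by
    funext m; fin_cases m <;> simp
  rw [h1, α.map_swap _ (by decide : (0 : Fin 2) ≠ 1)]

variable (e : Module.Basis (Fin 4) ℝ g)

theorem coordE (a i : Fin 4) : e.coord a (e i) = if i = a then 1 else 0 := by
  simp [Module.Basis.coord_apply, Module.Basis.repr_self, Finsupp.single_apply]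

variable (hbr : ∀ i j : Fin 4, i < j → ⁅e i, e j⁆ =
      (if i = 0 ∧ j = 2 then -e 3 else if i = 2 ∧ j = 3 then -e 3 else 0))
include hbr

theorem basis_bracket : ∀ i j : Fin 4, ⁅e i, e j⁆ =
    (if i = 0 ∧ j = 2 then -e 3 else if i = 2 ∧ j = 0 then e 3
     else if i = 2 ∧ j = 3 then -e 3 else if i = 3 ∧ j = 2 then e 3 else 0) := by
  have skew : ∀ i j : Fin 4, j < i → ⁅e i, e j⁆ = -⁅e j, e i⁆ := fun i j _ =>
    (neg_eq_iff_eq_neg.mpr (lie_skew (e j) (e i)).symm).symm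
  intro i j
  rcases lt_trichotomy i j with h | h | h
  · rw [hbr i j h]; fin_cases i <;> fin_cases j <;> simp_all
  · subst h; rw [lie_self]; fin_cases i <;> simp
  · rw [skew i j h, hbr j i h]; fin_cases i <;> fin_cases j <;> simp_all

theorem bracket_eq (x y : g) :
    ⁅x, y⁆ = ((e.coord 2 x * e.coord 0 y - e.coord 0 x * e.coord 2 y) +
              (e.coord 3 x * e.coord 2 y - e.coord 2 x * e.coord 3 y)) • e 3 := by
  have hb := basis_bracket g e hbr
  have sum_lie' : ∀ (f : Fin 4 → g) (z : g), ⁅∑ i, f i, z⁆ = ∑ i, ⁅f i, z⁆ := by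
    intro f z; rw [Fin.sum_univ_four, Fin.sum_univ_four]; simp [add_lie]
  have lie_sum' : ∀ (z : g) (f : Fin 4 → g), ⁅z, ∑ i, f i⁆ = ∑ i, ⁅z, f i⁆ := by
    intro z f; rw [Fin.sum_univ_four, Fin.sum_univ_four]; simp [lie_add]
  conv_lhs => rw [← e.sum_repr x, ← e.sum_repr y]
  rw [sum_lie']
  simp only [lie_sum', smul_lie, lie_smul, hb]
  simp only [Fin.sum_univ_four, Module.Basis.coord_apply]
  simp (config := { decide := true }) only [Fin.isValue, if_true, if_false, and_true,
    and_false, true_and, false_and, ite_true, ite_false]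
  norm_num [Fin.ext_iff, smul_smul]
  module

theorem closed_w01 : ceD g (wedge g ![e.coord 0, e.coord 1]) = 0 := by
  funext x
  rw [ceD_two_apply, bracket_eq g e hbr (x 0) (x 1), bracket_eq g e hbr (x 0) (x 2),
    bracket_eq g e hbr (x 1) (x 2)]
  simp only [wedge_two_apply, Matrix.cons_val_zero, Matrix.cons_val_one, Matrix.head_cons,
    map_smul, smul_eq_mul, coordE, Pi.zero_apply]
  simp (config := { decide := true }) only [Fin.isValue, if_true, if_false, ite_true, ite_false]
  norm_num
  try ring

theorem closed_w12 : ceD g (wedge g ![e.coord 1, e.coord 2]) = 0 := by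
  funext x
  rw [ceD_two_apply, bracket_eq g e hbr (x 0) (x 1), bracket_eq g e hbr (x 0) (x 2),
    bracket_eq g e hbr (x 1) (x 2)]
  simp only [wedge_two_apply, Matrix.cons_val_zero, Matrix.cons_val_one, Matrix.head_cons,
    map_smul, smul_eq_mul, coordE, Pi.zero_apply]
  simp (config := { decide := true }) only [Fin.isValue, if_true, if_false, ite_true, ite_false]
  norm_num
  try ring

theorem closed_w02 : ceD g (wedge g ![e.coord 0, e.coord 2]) = 0 := by
  funext x
  rw [ceD_two_apply, bracket_eq g e hbr (x 0) (x 1), bracket_eq g e hbr (x 0) (x 2),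
    bracket_eq g e hbr (x 1) (x 2)]
  simp only [wedge_two_apply, Matrix.cons_val_zero, Matrix.cons_val_one, Matrix.head_cons,
    map_smul, smul_eq_mul, coordE, Pi.zero_apply]
  simp (config := { decide := true }) only [Fin.isValue, if_true, if_false, ite_true, ite_false]
  norm_num
  try ring

theorem closed_w23 : ceD g (wedge g ![e.coord 2, e.coord 3]) = 0 := by
  funext x
  rw [ceD_two_apply, bracket_eq g e hbr (x 0) (x 1), bracket_eq g e hbr (x 0) (x 2),
    bracket_eq g e hbr (x 1) (x 2)]
  simp only [wedge_two_apply, Matrix.cons_val_zero, Matrix.cons_val_one, Matrix.head_cons,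
    map_smul, smul_eq_mul, coordE, Pi.zero_apply]
  simp (config := { decide := true }) only [Fin.isValue, if_true, if_false, ite_true, ite_false]
  norm_num
  try ring

theorem dcoord3 : ceD g (wedge g ![e.coord 3]) =
    ⇑(wedge g ![e.coord 0, e.coord 2] + wedge g ![e.coord 2, e.coord 3]) := by
  funext x
  rw [ceD_one_apply, AlternatingMap.add_apply, wedge_one_apply,
    bracket_eq g e hbr (x 0) (x 1)]
  simp only [wedge_two_apply, Matrix.cons_val_zero, Matrix.cons_val_one, Matrix.head_cons,
    map_smul, smul_eq_mul, coordE]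
  simp (config := { decide := true }) only [Fin.isValue, if_true, if_false, ite_true, ite_false]
  norm_num
  try ring

end Helpers15
noncomputable section

section Stmt15

variable (g : Type*) [LieRing g] [LieAlgebra ℝ g] (e : Module.Basis (Fin 4) ℝ g)

/-- `g⁺ = span(e_1, e_2)` (0-indexed: `e 0, e 1`). -/
def gP : Submodule ℝ g := Submodule.span ℝ {e 0, e 1}

/-- `g⁻ = span(e_3, e_4)` (0-indexed: `e 2, e 3`). -/
def gM : Submodule ℝ g := Submodule.span ℝ {e 2, e 3}

set_option maxHeartbeats 2000000

/-- On the (non-unimodular) 4-dimensional solvable Lie algebra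
with `[e_1,e_3] = −e_4`, `[e_3,e_4] = −e_4`, the non-Abelian D-complex structure
with `g⁺ = span(e_1,e_2)`, `g⁻ = span(e_3,e_4)` is linear C∞-full but not linear
C∞-pure at the 2nd stage: `0 ≠ [e^3∧e^4] ∈ H^{2+}_K ∩ H^{2−}_K` since
`e^3∧e^4 − d e^4 = −e^1∧e^3`. -/
theorem non_unimodular_full_not_pure
    (hbr : ∀ i j : Fin 4, i < j → ⁅e i, e j⁆ =
      (if i = 0 ∧ j = 2 then -e 3 else if i = 2 ∧ j = 3 then -e 3 else 0))
    (K : g →ₗ[ℝ] g)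
    (hKp : ∀ x ∈ gP g e, K x = x) (hKq : ∀ x ∈ gM g e, K x = -x) :
    LinearMap.trace ℝ g (LieAlgebra.ad ℝ g (e 2)) = -1 ∧
    ¬ (∀ x : g, LinearMap.trace ℝ g (LieAlgebra.ad ℝ g x) = 0) ∧
    IsCompl (gP g e) (gM g e) ∧
    (∀ x ∈ gP g e, ∀ y ∈ gP g e, ⁅x, y⁆ = (0 : g)) ∧
    (∀ x ∈ gM g e, ∀ y ∈ gM g e, ⁅x, y⁆ ∈ gM g e) ∧
    ¬ (∀ x ∈ gM g e, ∀ y ∈ gM g e, ⁅x, y⁆ = (0 : g)) ∧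
    Hplus g K 2 ⊔ Hminus g K 2 = ⊤ ∧
    (∃ (h12 : ceD g (wedge g ![e.coord 0, e.coord 1]) = 0)
       (h34 : ceD g (wedge g ![e.coord 2, e.coord 3]) = 0)
       (h23 : ceD g (wedge g ![e.coord 1, e.coord 2]) = 0),
      cls g (wedge g ![e.coord 0, e.coord 1]) h12 ∈ Hplus g K 2 ∧
      cls g (wedge g ![e.coord 2, e.coord 3]) h34 ∈ Hplus g K 2 ∧
      cls g (wedge g ![e.coord 1, e.coord 2]) h23 ∈ Hminus g K 2 ∧
      Submodule.span ℝ
        {cls g (wedge g ![e.coord 0, e.coord 1]) h12,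
         cls g (wedge g ![e.coord 2, e.coord 3]) h34,
         cls g (wedge g ![e.coord 1, e.coord 2]) h23} =
        (⊤ : Submodule ℝ (Hcoh g 2))) ∧
    ceD g (wedge g ![e.coord 3]) =
      ⇑(wedge g ![e.coord 0, e.coord 2] + wedge g ![e.coord 2, e.coord 3]) ∧
    (∃ (h34 : ceD g (wedge g ![e.coord 2, e.coord 3]) = 0)
       (h13 : ceD g (-(wedge g ![e.coord 0, e.coord 2])) = 0),
      cls g (wedge g ![e.coord 2, e.coord 3]) h34 =
        cls g (-(wedge g ![e.coord 0, e.coord 2])) h13 ∧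
      cls g (wedge g ![e.coord 2, e.coord 3]) h34 ≠ 0 ∧
      cls g (wedge g ![e.coord 2, e.coord 3]) h34 ∈
        Hplus g K 2 ⊓ Hminus g K 2) := by
  classical
  have hb := basis_bracket g e hbr
  have b02 : ⁅e 0, e 2⁆ = -e 3 := by
    rw [hb 0 2]; simp (config := { decide := true })
  have b03 : ⁅e 0, e 3⁆ = 0 := by
    rw [hb 0 3]; simp (config := { decide := true })
  have b12 : ⁅e 1, e 2⁆ = 0 := by
    rw [hb 1 2]; simp (config := { decide := true })
  have b13 : ⁅e 1, e 3⁆ = 0 := by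
    rw [hb 1 3]; simp (config := { decide := true })
  have b23 : ⁅e 2, e 3⁆ = -e 3 := by
    rw [hb 2 3]; simp (config := { decide := true })
  -- trace
  have htr : LinearMap.trace ℝ g (LieAlgebra.ad ℝ g (e 2)) = -1 := by
    rw [LinearMap.trace_eq_matrix_trace ℝ e, Matrix.trace]
    have hdiag : ∀ i : Fin 4,
        Matrix.diag (LinearMap.toMatrix e e (LieAlgebra.ad ℝ g (e 2))) i
          = if i = 3 then -1 else 0 := by
      intro i
      rw [Matrix.diag_apply, LinearMap.toMatrix_apply, LieAlgebra.ad_apply, hb]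
      fin_cases i <;>
        simp (config := { decide := true }) [Module.Basis.repr_self, Finsupp.single_apply, map_neg]
    rw [Fin.sum_univ_four, hdiag 0, hdiag 1, hdiag 2, hdiag 3]
    simp (config := { decide := true })
  have hnu : ¬(∀ x : g, LinearMap.trace ℝ g (LieAlgebra.ad ℝ g x) = 0) := by
    intro hcon
    have := hcon (e 2)
    rw [htr] at this
    norm_num at this
  -- memberships
  have memP0 : e 0 ∈ gP g e := Submodule.subset_span (by simp)
  have memP1 : e 1 ∈ gP g e := Submodule.subset_span (by simp)
  have memM2 : e 2 ∈ gM g e := Submodule.subset_span (by simp)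
  have memM3 : e 3 ∈ gM g e := Submodule.subset_span (by simp)
  have coord_spanP : ∀ x ∈ gP g e, e.coord 2 x = 0 ∧ e.coord 3 x = 0 := by
    intro x hx
    rw [gP, Submodule.mem_span_pair] at hx
    obtain ⟨a, b, rfl⟩ := hx
    constructor <;>
      simp (config := { decide := true }) [map_add, map_smul, coordE]
  have coord_spanM : ∀ x ∈ gM g e, e.coord 0 x = 0 ∧ e.coord 1 x = 0 := by
    intro x hx
    rw [gM, Submodule.mem_span_pair] at hx
    obtain ⟨a, b, rfl⟩ := hx
    constructor <;>
      simp (config := { decide := true }) [map_add, map_smul, coordE]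
  have hcompl : IsCompl (gP g e) (gM g e) := by
    constructor
    · rw [disjoint_iff_inf_le]
      intro x hx
      rw [Submodule.mem_inf] at hx
      obtain ⟨h2, h3⟩ := coord_spanP x hx.1
      obtain ⟨h0, h1⟩ := coord_spanM x hx.2
      rw [Submodule.mem_bot]
      have hrep := e.sum_repr x
      rw [Fin.sum_univ_four] at hrep
      simp only [Module.Basis.coord_apply] at h0 h1 h2 h3
      rw [← hrep, h0, h1, h2, h3]
      simp
    · rw [codisjoint_iff, eq_top_iff, ← e.span_eq]
      apply Submodule.span_le.mpr
      rintro x ⟨i, rfl⟩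
      fin_cases i
      · exact Submodule.mem_sup_left memP0
      · exact Submodule.mem_sup_left memP1
      · exact Submodule.mem_sup_right memM2
      · exact Submodule.mem_sup_right memM3
  have habP : ∀ x ∈ gP g e, ∀ y ∈ gP g e, ⁅x, y⁆ = (0 : g) := by
    intro x hx y hy
    obtain ⟨hx2, _⟩ := coord_spanP x hx
    obtain ⟨hy2, _⟩ := coord_spanP y hy
    rw [bracket_eq g e hbr, hx2, hy2]
    ring_nf
    simp
  have hclM : ∀ x ∈ gM g e, ∀ y ∈ gM g e, ⁅x, y⁆ ∈ gM g e := by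
    intro x _ y _
    rw [bracket_eq g e hbr]
    exact Submodule.smul_mem _ _ memM3
  have hnabM : ¬(∀ x ∈ gM g e, ∀ y ∈ gM g e, ⁅x, y⁆ = (0 : g)) := by
    intro hcon
    have := hcon (e 2) memM2 (e 3) memM3
    rw [b23] at this
    exact e.ne_zero 3 (neg_eq_zero.mp this)
  -- K on basis
  have K0 : K (e 0) = e 0 := hKp _ memP0
  have K1 : K (e 1) = e 1 := hKp _ memP1
  have K2 : K (e 2) = -e 2 := hKq _ memM2
  have K3 : K (e 3) = -e 3 := hKq _ memM3
  -- invariance / anti-invariance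
  have fun2 : ∀ v : Fin 2 → Fin 4, (fun i => e (v i)) = ![e (v 0), e (v 1)] := by
    intro v; funext m; fin_cases m <;> rfl
  have compKfun : ∀ v : Fin 2 → Fin 4, (fun i => K (e (v i))) = ![K (e (v 0)), K (e (v 1))] := by
    intro v; funext m; fin_cases m <;> rfl
  have inv01 : (wedge g ![e.coord 0, e.coord 1]).compLinearMap K
      = wedge g ![e.coord 0, e.coord 1] := by
    apply Module.Basis.ext_alternating e
    intro v _
    rw [AlternatingMap.compLinearMap_apply]
    rw [compKfun v]
    rw [fun2 v, wedge_two_apply, wedge_two_apply]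
    simp only [Matrix.cons_val_zero, Matrix.cons_val_one, Matrix.head_cons]
    generalize v 0 = i
    generalize v 1 = j
    fin_cases i <;> fin_cases j <;>
      simp (config := { decide := true }) [K0, K1, K2, K3, coordE, map_neg]
  have inv23 : (wedge g ![e.coord 2, e.coord 3]).compLinearMap K
      = wedge g ![e.coord 2, e.coord 3] := by
    apply Module.Basis.ext_alternating e
    intro v _
    rw [AlternatingMap.compLinearMap_apply]
    rw [compKfun v]
    rw [fun2 v, wedge_two_apply, wedge_two_apply]
    simp only [Matrix.cons_val_zero, Matrix.cons_val_one, Matrix.head_cons]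
    generalize v 0 = i
    generalize v 1 = j
    fin_cases i <;> fin_cases j <;>
      simp (config := { decide := true }) [K0, K1, K2, K3, coordE, map_neg]
  have anti12 : (wedge g ![e.coord 1, e.coord 2]).compLinearMap K
      = -(wedge g ![e.coord 1, e.coord 2]) := by
    apply Module.Basis.ext_alternating e
    intro v _
    rw [AlternatingMap.compLinearMap_apply, AlternatingMap.neg_apply]
    rw [compKfun v]
    rw [fun2 v, wedge_two_apply, wedge_two_apply]
    simp only [Matrix.cons_val_zero, Matrix.cons_val_one, Matrix.head_cons]
    generalize v 0 = i
    generalize v 1 = j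
    fin_cases i <;> fin_cases j <;>
      simp (config := { decide := true }) [K0, K1, K2, K3, coordE, map_neg]
  have anti02 : (wedge g ![e.coord 0, e.coord 2]).compLinearMap K
      = -(wedge g ![e.coord 0, e.coord 2]) := by
    apply Module.Basis.ext_alternating e
    intro v _
    rw [AlternatingMap.compLinearMap_apply, AlternatingMap.neg_apply]
    rw [compKfun v]
    rw [fun2 v, wedge_two_apply, wedge_two_apply]
    simp only [Matrix.cons_val_zero, Matrix.cons_val_one, Matrix.head_cons]
    generalize v 0 = i
    generalize v 1 = j
    fin_cases i <;> fin_cases j <;>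
      simp (config := { decide := true }) [K0, K1, K2, K3, coordE, map_neg]
  have antiNeg02 : (-(wedge g ![e.coord 0, e.coord 2])).compLinearMap K
      = -(-(wedge g ![e.coord 0, e.coord 2])) := by
    have hc : (-(wedge g ![e.coord 0, e.coord 2])).compLinearMap K
        = -((wedge g ![e.coord 0, e.coord 2]).compLinearMap K) :=
      AlternatingMap.ext fun v => rfl
    rw [hc, anti02]
  -- closedness
  have h12 : ceD g (wedge g ![e.coord 0, e.coord 1]) = 0 := closed_w01 g e hbr
  have h34 : ceD g (wedge g ![e.coord 2, e.coord 3]) = 0 := closed_w23 g e hbr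
  have h23 : ceD g (wedge g ![e.coord 1, e.coord 2]) = 0 := closed_w12 g e hbr
  have h13c : ceD g (-(wedge g ![e.coord 0, e.coord 2])) = 0 := by
    rw [show -(wedge g ![e.coord 0, e.coord 2]) = (-1 : ℝ) • wedge g ![e.coord 0, e.coord 2]
        from (neg_one_smul ℝ _).symm,
      ceD_smul, closed_w02 g e hbr]
    simp
  -- class memberships
  have hm01 : cls g (wedge g ![e.coord 0, e.coord 1]) h12 ∈ Hplus g K 2 :=
    Submodule.subset_span ⟨_, h12, inv01, rfl⟩
  have hm34 : cls g (wedge g ![e.coord 2, e.coord 3]) h34 ∈ Hplus g K 2 :=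
    Submodule.subset_span ⟨_, h34, inv23, rfl⟩
  have hm23 : cls g (wedge g ![e.coord 1, e.coord 2]) h23 ∈ Hminus g K 2 :=
    Submodule.subset_span ⟨_, h23, anti12, rfl⟩
  -- the span of the three classes is everything
  have hcl : ceD g (wedge g ![e.coord 0, e.coord 2] + wedge g ![e.coord 2, e.coord 3]) = 0 := by
    rw [ceD_add g, closed_w02 g e hbr, closed_w23 g e hbr]; simp
  have hzero : (Submodule.Quotient.mk
      (⟨wedge g ![e.coord 0, e.coord 2] + wedge g ![e.coord 2, e.coord 3], hcl⟩ : Zsub g 2)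
      : Hcoh g 2) = 0 := by
    rw [Submodule.Quotient.mk_eq_zero, Submodule.mem_comap]
    exact ⟨wedge g ![e.coord 3], dcoord3 g e hbr⟩
  have hspan : Submodule.span ℝ
      {cls g (wedge g ![e.coord 0, e.coord 1]) h12,
       cls g (wedge g ![e.coord 2, e.coord 3]) h34,
       cls g (wedge g ![e.coord 1, e.coord 2]) h23} = (⊤ : Submodule ℝ (Hcoh g 2)) := by
    rw [eq_top_iff]
    intro q _
    obtain ⟨⟨α, hα⟩, rfl⟩ := Submodule.Quotient.mk_surjective _ q
    have diag : ∀ u : g, α ![u, u] = 0 := fun u =>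
      α.map_eq_zero_of_eq ![u, u] (i := 0) (j := 1) rfl (by decide)
    have h03 : α ![e 0, e 3] = 0 := by
      have h := congrFun hα ![e 0, e 2, e 3]
      rw [ceD_two_apply] at h
      simp only [Matrix.cons_val_zero, Matrix.cons_val_one, Matrix.head_cons,
        Matrix.cons_val_two, Matrix.tail_cons, Pi.zero_apply] at h
      rw [b02, b03, b23, alt2_neg_left, alt2_neg_left, alt2_zero_left, diag,
        alt2_swap] at h
      linarith
    have h13 : α ![e 1, e 3] = 0 := by
      have h := congrFun hα ![e 1, e 2, e 3]
      rw [ceD_two_apply] at h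
      simp only [Matrix.cons_val_zero, Matrix.cons_val_one, Matrix.head_cons,
        Matrix.cons_val_two, Matrix.tail_cons, Pi.zero_apply] at h
      rw [b12, b13, b23, alt2_zero_left, alt2_zero_left, alt2_neg_left, alt2_swap] at h
      linarith
    have hdec : α = α ![e 0, e 1] • wedge g ![e.coord 0, e.coord 1]
        + α ![e 0, e 2] • wedge g ![e.coord 0, e.coord 2]
        + α ![e 1, e 2] • wedge g ![e.coord 1, e.coord 2]
        + α ![e 2, e 3] • wedge g ![e.coord 2, e.coord 3] := by
      apply Module.Basis.ext_alternating e
      intro v hv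
      have hne : v 0 ≠ v 1 := fun hh => absurd (hv hh) (by decide)
      have s10 := alt2_swap α (e 0) (e 1)
      have s20 := alt2_swap α (e 0) (e 2)
      have s21 := alt2_swap α (e 1) (e 2)
      have s30 := alt2_swap α (e 0) (e 3)
      have s31 := alt2_swap α (e 1) (e 3)
      have s32 := alt2_swap α (e 2) (e 3)
      rw [fun2 v]
      simp only [AlternatingMap.add_apply, AlternatingMap.smul_apply, wedge_two_apply,
        Matrix.cons_val_zero, Matrix.cons_val_one, Matrix.head_cons, smul_eq_mul, coordE]
      revert hne
      generalize v 0 = i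
      generalize v 1 = j
      intro hne
      fin_cases i <;> fin_cases j
      all_goals (try exact absurd rfl hne)
      all_goals simp (config := { decide := true }) only [Fin.isValue, if_true, if_false,
        ite_true, ite_false]
      all_goals (try simp only [show (⟨0, by norm_num⟩ : Fin 4) = 0 from rfl,
        show (⟨1, by norm_num⟩ : Fin 4) = 1 from rfl,
        show (⟨2, by norm_num⟩ : Fin 4) = 2 from rfl,
        show (⟨3, by norm_num⟩ : Fin 4) = 3 from rfl])
      all_goals (try simp only [diag, h03, h13, s10, s20, s21, s30, s31, s32])
      all_goals (first | rfl | ring | norm_num)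
    have hdec2 : (⟨α, hα⟩ : Zsub g 2) =
        α ![e 0, e 1] • (⟨wedge g ![e.coord 0, e.coord 1], h12⟩ : Zsub g 2)
        + (α ![e 2, e 3] - α ![e 0, e 2]) • (⟨wedge g ![e.coord 2, e.coord 3], h34⟩ : Zsub g 2)
        + α ![e 1, e 2] • (⟨wedge g ![e.coord 1, e.coord 2], h23⟩ : Zsub g 2)
        + α ![e 0, e 2] • (⟨wedge g ![e.coord 0, e.coord 2]
            + wedge g ![e.coord 2, e.coord 3], hcl⟩ : Zsub g 2) := by
      apply Subtype.ext
      push_cast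
      conv_lhs => rw [hdec]
      module
    rw [hdec2]
    simp only [Submodule.Quotient.mk_add, Submodule.Quotient.mk_smul]
    rw [hzero, smul_zero, add_zero]
    refine Submodule.add_mem _ (Submodule.add_mem _ ?_ ?_) ?_
    · exact Submodule.smul_mem _ _ (Submodule.subset_span (Set.mem_insert _ _))
    · exact Submodule.smul_mem _ _
        (Submodule.subset_span (Set.mem_insert_of_mem _ (Set.mem_insert _ _)))
    · exact Submodule.smul_mem _ _
        (Submodule.subset_span (Set.mem_insert_of_mem _ (Set.mem_insert_of_mem _ rfl)))
  have hsup : Hplus g K 2 ⊔ Hminus g K 2 = ⊤ := by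
    rw [eq_top_iff, ← hspan]
    apply Submodule.span_le.mpr
    rintro c hc
    simp only [Set.mem_insert_iff, Set.mem_singleton_iff] at hc
    rcases hc with rfl | rfl | rfl
    · exact Submodule.mem_sup_left hm01
    · exact Submodule.mem_sup_left hm34
    · exact Submodule.mem_sup_right hm23
  -- the class of e^3∧e^4 is nonzero
  have hne0 : cls g (wedge g ![e.coord 2, e.coord 3]) h34 ≠ 0 := by
    rw [cls, Ne, Submodule.Quotient.mk_eq_zero, Submodule.mem_comap]
    rintro ⟨β, hβ⟩
    have hβ' : ceD g β = ⇑(wedge g ![e.coord 2, e.coord 3]) := hβ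
    have h1 := congrFun hβ' ![e 0, e 2]
    have h2 := congrFun hβ' ![e 2, e 3]
    rw [ceD_one_apply] at h1 h2
    simp only [Matrix.cons_val_zero, Matrix.cons_val_one, Matrix.head_cons] at h1 h2
    rw [b02, alt1_neg] at h1
    rw [b23, alt1_neg] at h2
    rw [wedge_two_apply] at h1 h2
    simp only [Matrix.cons_val_zero, Matrix.cons_val_one, Matrix.head_cons, coordE] at h1 h2
    simp (config := { decide := true }) only [Fin.isValue, if_true, if_false,
      ite_true, ite_false] at h1 h2
    norm_num at h1 h2
    rw [h1] at h2
    norm_num at h2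
  -- its class agrees with that of −e^1∧e^3
  have heq : cls g (wedge g ![e.coord 2, e.coord 3]) h34
      = cls g (-(wedge g ![e.coord 0, e.coord 2])) h13c := by
    rw [cls, cls, Submodule.Quotient.eq, Submodule.mem_comap]
    refine ⟨wedge g ![e.coord 3], ?_⟩
    have hco : (((⟨wedge g ![e.coord 2, e.coord 3], h34⟩ : Zsub g 2)
        - ⟨-(wedge g ![e.coord 0, e.coord 2]), h13c⟩ : Zsub g 2) : AlternatingMap ℝ g ℝ (Fin 2))
        = wedge g ![e.coord 0, e.coord 2] + wedge g ![e.coord 2, e.coord 3] := by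
      push_cast
      module
    rw [Submodule.coe_subtype, hco]
    exact dcoord3 g e hbr
  have hminf : cls g (wedge g ![e.coord 2, e.coord 3]) h34 ∈ Hplus g K 2 ⊓ Hminus g K 2 := by
    rw [Submodule.mem_inf]
    refine ⟨Submodule.subset_span ⟨_, h34, inv23, rfl⟩, ?_⟩
    rw [heq]
    exact Submodule.subset_span ⟨_, h13c, antiNeg02, rfl⟩
  exact ⟨htr, hnu, hcompl, habP, hclM, hnabM, hsup,
    ⟨h12, h34, h23, hm01, hm34, hm23, hspan⟩, dcoord3 g e hbr,
    ⟨h34, h13c, heq, hne0, hminf⟩⟩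

end Stmt15

end
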